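/- Let R and S be infinite principal ideal domains that are not fields. The Macías spaces M(R) and M(S) are homeomorphic if and only if |U(R)| = |U(S)| and the sets of associate classes of prime elements of R and S have the same cardinality. -/

import Mathlib

/-- For nonzero `k`, the basic set `σₖ⁰ = {s ≠ 0 : ⟨k⟩ + ⟨s⟩ = R}` of the Macías topology. -/
def sigma0 (R : Type*) [CommRing R] (k : R) : Set {x : R // x ≠ 0} :=
  {s | Ideal.span {k} + Ideal.span {s.1} = ⊤}

/-- The Macías topology on `R \ {0}`, generated by the sets `σₖ⁰` for `k ≠ 0`. -/
def maciasTop (R : Type*) [CommRing R] : TopologicalSpace {x : R // x ≠ 0} :=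
  TopologicalSpace.generateFrom {U | ∃ k : R, k ≠ 0 ∧ U = sigma0 R k}

set_option linter.unusedSectionVars false
set_option linter.unusedVariables false

namespace Stmt19Aux

open TopologicalSpace

attribute [local instance] maciasTop

variable {A : Type*} [CommRing A] [IsDomain A] [IsPrincipalIdealRing A]

lemma mem_sigma0 {k : A} {x : {x : A // x ≠ 0}} :
    x ∈ sigma0 A k ↔ IsCoprime k x.1 := by
  show (Ideal.span {k} + Ideal.span {x.1} = ⊤) ↔ _
  rw [Ideal.add_eq_sup, ← Ideal.isCoprime_iff_sup_eq, Ideal.isCoprime_span_singleton_iff]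

lemma isCoprime_iff_forall_prime {k s : A} (hk : k ≠ 0) :
    IsCoprime k s ↔ ∀ p : A, Prime p → p ∣ k → ¬ p ∣ s := by
  constructor
  · rintro ⟨a, b, hab⟩ p hp hpk hps
    exact hp.not_unit (isUnit_of_dvd_one
      (hab ▸ (Dvd.dvd.add (hpk.mul_left a) (hps.mul_left b))))
  · intro h
    obtain ⟨d, hd⟩ := (IsPrincipalIdealRing.principal
      (Ideal.span {k} ⊔ Ideal.span {s})).principal
    have hdk : d ∣ k := by
      rw [← Ideal.mem_span_singleton (α := A), show Ideal.span {d} = Submodule.span A {d} from rfl, ← hd]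
      exact Ideal.mem_sup_left (Ideal.mem_span_singleton_self k)
    have hds : d ∣ s := by
      rw [← Ideal.mem_span_singleton (α := A), show Ideal.span {d} = Submodule.span A {d} from rfl, ← hd]
      exact Ideal.mem_sup_right (Ideal.mem_span_singleton_self s)
    have hdu : IsUnit d := by
      by_contra hdu
      have hd0 : d ≠ 0 := fun h0 => hk (by simpa [h0] using hdk)
      obtain ⟨p, hpirr, hpd⟩ := WfDvdMonoid.exists_irreducible_factor hdu hd0
      exact h p ((irreducible_iff_prime).mp hpirr)
        (hpd.trans hdk) (hpd.trans hds)
    rw [← Ideal.isCoprime_span_singleton_iff, Ideal.isCoprime_iff_sup_eq, hd]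
    exact Ideal.span_singleton_eq_top.mpr hdu

lemma isCoprime_iff_forall_primeA {k s : A} (hk : k ≠ 0) :
    IsCoprime k s ↔ ∀ P : Associates A, Prime P →
      P ∣ Associates.mk k → ¬ P ∣ Associates.mk s := by
  rw [isCoprime_iff_forall_prime hk]
  constructor
  · intro h P hP hPk hPs
    have hp : Prime (Quot.out P) := Associates.prime_mk.mp (by rwa [Associates.quot_out])
    refine h _ hp ?_ ?_
    · exact Associates.mk_dvd_mk.mp (by rwa [Associates.quot_out])
    · exact Associates.mk_dvd_mk.mp (by rwa [Associates.quot_out])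
  · intro h p hp hpk hps
    exact h (Associates.mk p) (Associates.prime_mk.mpr hp)
      (Associates.mk_dvd_mk.mpr hpk) (Associates.mk_dvd_mk.mpr hps)

/-- The set of prime associate classes dividing `x`. -/
def suppA (x : {x : A // x ≠ 0}) : Set (Associates A) :=
  {P | Prime P ∧ P ∣ Associates.mk x.1}

lemma genopen_mono {x y : {x : A // x ≠ 0}} (hsub : suppA y ⊆ suppA x) {U : Set {x : A // x ≠ 0}}
    (hU : TopologicalSpace.GenerateOpen {U | ∃ k : A, k ≠ 0 ∧ U = sigma0 A k} U)
    (hx : x ∈ U) : y ∈ U := by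
  induction hU with
  | basic V hV =>
    obtain ⟨k, hk, rfl⟩ := hV
    rw [mem_sigma0, isCoprime_iff_forall_primeA hk] at hx ⊢
    intro P hP hPk hPy
    exact hx P hP hPk (hsub ⟨hP, hPy⟩).2
  | univ => trivial
  | inter U V _ _ ihU ihV => exact ⟨ihU hx.1, ihV hx.2⟩
  | sUnion S _ ih =>
    obtain ⟨V, hVS, hxV⟩ := hx
    exact ⟨V, hVS, ih V hVS hxV⟩

lemma mem_closure_singleton {x y : {x : A // x ≠ 0}} :
    x ∈ @closure _ (maciasTop A) {y} ↔ suppA y ⊆ suppA x := by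
  letI := maciasTop A
  rw [mem_closure_iff]
  constructor
  · intro H P hP
    obtain ⟨hPp, hPy⟩ := hP
    refine ⟨hPp, ?_⟩
    by_contra hPx
    have hp : Prime (Quot.out P) := Associates.prime_mk.mp (by rwa [Associates.quot_out])
    have hopen : IsOpen (sigma0 A (Quot.out P)) :=
      isOpen_generateFrom_of_mem ⟨Quot.out P, hp.ne_zero, rfl⟩
    have hxmem : x ∈ sigma0 A (Quot.out P) := by
      rw [mem_sigma0, isCoprime_iff_forall_prime hp.ne_zero]
      intro q hq hqp hqx
      exact hPx (by
        rw [← Associates.quot_out P, Associates.mk_dvd_mk]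
        exact ((hq.associated_of_dvd hp hqp).symm.dvd).trans hqx)
    obtain ⟨z, hz1, hz2⟩ := H _ hopen hxmem
    rw [Set.mem_singleton_iff] at hz2
    subst hz2
    rw [mem_sigma0, isCoprime_iff_forall_prime hp.ne_zero] at hz1
    exact hz1 _ hp dvd_rfl (by
      rw [← Associates.mk_dvd_mk]
      rw [Associates.quot_out P]
      exact hPy)
  · intro H U hU hxU
    exact ⟨y, genopen_mono H hU hxU, rfl⟩

lemma suppA_eq_empty_iff {y : {x : A // x ≠ 0}} : suppA y = ∅ ↔ IsUnit y.1 := by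
  constructor
  · intro h
    by_contra hu
    obtain ⟨p, hpirr, hpd⟩ := WfDvdMonoid.exists_irreducible_factor hu y.2
    have hp : Prime p := (irreducible_iff_prime).mp hpirr
    have : Associates.mk p ∈ suppA y :=
      ⟨Associates.prime_mk.mpr hp, Associates.mk_dvd_mk.mpr hpd⟩
    simp [h] at this
  · intro h
    ext P
    simp only [suppA, Set.mem_setOf_eq, Set.mem_empty_iff_false, iff_false, not_and]
    intro hP hPd
    rw [Associates.mk_eq_one.mpr h] at hPd
    exact hP.not_unit (isUnit_of_dvd_one hPd)

lemma suppA_prime {p : A} (hp : Prime p) :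
    suppA (⟨p, hp.ne_zero⟩ : {x : A // x ≠ 0}) = {Associates.mk p} := by
  ext P
  simp only [suppA, Set.mem_setOf_eq, Set.mem_singleton_iff]
  constructor
  · rintro ⟨hP, hPd⟩
    exact associated_iff_eq.mp (hP.associated_of_dvd (Associates.prime_mk.mpr hp) hPd)
  · rintro rfl
    exact ⟨Associates.prime_mk.mpr hp, dvd_rfl⟩

lemma closure_singleton_eq_univ {y : {x : A // x ≠ 0}} :
    @closure _ (maciasTop A) {y} = Set.univ ↔ suppA y = ∅ := by
  constructor
  · intro h
    by_contra hne
    obtain ⟨P, hP⟩ := Set.nonempty_iff_ne_empty.mpr hne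
    have h1 : (⟨1, one_ne_zero⟩ : {x : A // x ≠ 0}) ∈ @closure _ (maciasTop A) {y} := by
      rw [h]; trivial
    rw [mem_closure_singleton] at h1
    have := (h1 hP).2
    rw [show Associates.mk (1:A) = 1 from Associates.mk_one] at this
    exact hP.1.not_unit (isUnit_of_dvd_one this)
  · intro h
    ext x
    simp only [Set.mem_univ, iff_true]
    rw [mem_closure_singleton, h]
    exact Set.empty_subset _

section Homeo

variable {B : Type*} [CommRing B] [IsDomain B] [IsPrincipalIdealRing B]
variable (h : @Homeomorph {x : A // x ≠ 0} {x : B // x ≠ 0} (maciasTop A) (maciasTop B))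

lemma homeo_closure_mem {x y : {x : A // x ≠ 0}} :
    x ∈ @closure _ (maciasTop A) {y} ↔
      h x ∈ @closure _ (maciasTop B) {h y} := by
  letI := maciasTop A
  letI := maciasTop B
  constructor
  · intro hx
    have := Set.mem_image_of_mem h hx
    rwa [h.image_closure, Set.image_singleton] at this
  · intro hx
    have := Set.mem_image_of_mem h.symm hx
    rwa [h.symm.image_closure, Set.image_singleton, Homeomorph.symm_apply_apply,
      Homeomorph.symm_apply_apply] at this

lemma homeo_suppA_subset {x y : {x : A // x ≠ 0}} :
    suppA (h y) ⊆ suppA (h x) ↔ suppA y ⊆ suppA x := by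
  rw [← mem_closure_singleton, ← mem_closure_singleton, ← homeo_closure_mem]

lemma homeo_suppA_empty {x : {x : A // x ≠ 0}} :
    suppA (h x) = ∅ ↔ suppA x = ∅ := by
  rw [← closure_singleton_eq_univ, ← closure_singleton_eq_univ]
  letI := maciasTop A
  letI := maciasTop B
  constructor
  · intro hcl
    rw [← Homeomorph.symm_apply_apply h x]
    rw [← Set.image_singleton, ← h.symm.image_closure, hcl]
    exact Set.image_univ_of_surjective h.symm.surjective
  · intro hcl
    rw [← Set.image_singleton, ← h.image_closure, hcl]
    exact Set.image_univ_of_surjective h.surjective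

lemma homeo_suppA_singleton {x : {x : A // x ≠ 0}} {a : Associates A}
    (hx : suppA x = {a}) : ∃ b : Associates B, suppA (h x) = {b} := by
  letI := maciasTop A
  letI := maciasTop B
  have hne : suppA (h x) ≠ ∅ := by
    intro hc
    rw [homeo_suppA_empty h, hx] at hc
    exact Set.singleton_ne_empty a hc
  obtain ⟨b, hb⟩ := Set.nonempty_iff_ne_empty.mpr hne
  refine ⟨b, ?_⟩
  have hbq : Prime (Quot.out b) := Associates.prime_mk.mp (by rw [Associates.quot_out]; exact hb.1)
  set z : {x : B // x ≠ 0} := ⟨Quot.out b, hbq.ne_zero⟩ with hzdef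
  have hz : suppA z = {b} := by rw [hzdef, suppA_prime hbq, Associates.quot_out]
  -- suppA z ⊆ suppA (h x)
  have h1 : suppA z ⊆ suppA (h x) := by rw [hz]; exact Set.singleton_subset_iff.mpr hb
  -- transfer through h.symm
  have h2 : suppA (h.symm z) ⊆ suppA x := by
    have h2' := (homeo_suppA_subset h.symm (y := z) (x := h x)).mpr h1
    rwa [Homeomorph.symm_apply_apply] at h2'
  have h3 : suppA (h.symm z) ≠ ∅ := by
    intro hc
    rw [homeo_suppA_empty h.symm, hz] at hc
    exact Set.singleton_ne_empty b hc
  have h4 : suppA (h.symm z) = {a} := by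
    rw [hx] at h2
    obtain ⟨c, hc⟩ := Set.nonempty_iff_ne_empty.mpr h3
    have := h2 hc
    rw [Set.mem_singleton_iff] at this
    subst this
    exact Set.eq_singleton_iff_nonempty_unique_mem.mpr
      ⟨⟨c, hc⟩, fun y hy => Set.mem_singleton_iff.mp (h2 hy)⟩
  -- so suppA x ⊆ suppA (h.symm z); transfer back
  have h5 : suppA x ⊆ suppA (h.symm z) := by rw [h4, hx]
  have h6 : suppA (h x) ⊆ suppA z := by
    have h6' := (homeo_suppA_subset h (y := x) (x := h.symm z)).mpr h5
    rwa [Homeomorph.apply_symm_apply] at h6'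
  rw [hz] at h6
  exact Set.eq_singleton_iff_nonempty_unique_mem.mpr
    ⟨⟨b, hb⟩, fun y hy => Set.mem_singleton_iff.mp (h6 hy)⟩

lemma isUnit_homeo {u : {x : A // x ≠ 0}} (hu : IsUnit u.1) : IsUnit ((h u).1) := by
  rw [← suppA_eq_empty_iff] at hu ⊢
  rwa [homeo_suppA_empty h]

noncomputable def F : Aˣ → Bˣ := fun u =>
  (isUnit_homeo h (show IsUnit ((⟨u.1, u.ne_zero⟩ : {x : A // x ≠ 0}).1) from u.isUnit)).unit

lemma F_coe (u : Aˣ) : ((F h u : Bˣ) : B) = ((h ⟨u.1, u.ne_zero⟩).1) :=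
  IsUnit.unit_spec
    (isUnit_homeo h (show IsUnit ((⟨u.1, u.ne_zero⟩ : {x : A // x ≠ 0}).1) from u.isUnit))

lemma F_spec (u : Aˣ) :
    (⟨((F h u : Bˣ) : B), (F h u).ne_zero⟩ : {x : B // x ≠ 0}) = h ⟨u.1, u.ne_zero⟩ :=
  Subtype.ext (F_coe h u)

lemma FG (u : Aˣ) : F h.symm (F h u) = u := by
  apply Units.ext
  rw [F_coe h.symm (F h u), F_spec h u, Homeomorph.symm_apply_apply]

noncomputable def unitsEquiv : Aˣ ≃ Bˣ where
  toFun := F h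
  invFun := F h.symm
  left_inv := FG h
  right_inv := fun v => by have := FG h.symm v; rwa [Homeomorph.symm_symm] at this

lemma mem_image_prime {a : Associates A} :
    a ∈ Associates.mk '' {p : A | Prime p} ↔ Prime a := by
  constructor
  · rintro ⟨p, hp, rfl⟩
    exact Associates.prime_mk.mpr hp
  · intro ha
    exact ⟨Quot.out a, Associates.prime_mk.mp (by rw [Associates.quot_out]; exact ha),
      Associates.quot_out a⟩

def Rel (a : Associates A) (b : Associates B) : Prop :=
  ∃ x : {x : A // x ≠ 0}, suppA x = {a} ∧ suppA (h x) = {b}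

lemma rel_exists {a : Associates A} (ha : Prime a) : ∃ b, Rel h a b := by
  have hp : Prime (Quot.out a) := Associates.prime_mk.mp (by rw [Associates.quot_out]; exact ha)
  have hs : suppA (⟨Quot.out a, hp.ne_zero⟩ : {x : A // x ≠ 0}) = {a} := by
    rw [suppA_prime hp, Associates.quot_out]
  obtain ⟨b, hb⟩ := homeo_suppA_singleton h hs
  exact ⟨b, ⟨_, hs, hb⟩⟩

lemma rel_prime {a : Associates A} {b : Associates B} (hr : Rel h a b) : Prime b := by
  obtain ⟨x, _, h2⟩ := hr
  have : b ∈ suppA (h x) := by rw [h2]; exact Set.mem_singleton b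
  exact this.1

lemma rel_symm {a : Associates A} {b : Associates B} (hr : Rel h a b) : Rel h.symm b a := by
  obtain ⟨x, h1, h2⟩ := hr
  exact ⟨h x, h2, by rw [Homeomorph.symm_apply_apply]; exact h1⟩

lemma rel_unique {a : Associates A} {b b' : Associates B}
    (h1 : Rel h a b) (h2 : Rel h a b') : b = b' := by
  obtain ⟨x, hx1, hx2⟩ := h1
  obtain ⟨x', hx1', hx2'⟩ := h2
  have e : suppA (h x) = suppA (h x') :=
    Set.Subset.antisymm
      ((homeo_suppA_subset h).mpr (by rw [hx1, hx1']))
      ((homeo_suppA_subset h).mpr (by rw [hx1, hx1']))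
  rw [hx2, hx2'] at e
  exact Set.singleton_eq_singleton_iff.mp e

noncomputable def primesEquiv :
    ↥(Associates.mk '' {p : A | Prime p}) ≃ ↥(Associates.mk '' {p : B | Prime p}) where
  toFun a := ⟨(rel_exists h (mem_image_prime.mp a.2)).choose,
    mem_image_prime.mpr (rel_prime h (rel_exists h (mem_image_prime.mp a.2)).choose_spec)⟩
  invFun b := ⟨(rel_exists h.symm (mem_image_prime.mp b.2)).choose,
    mem_image_prime.mpr (rel_prime h.symm (rel_exists h.symm (mem_image_prime.mp b.2)).choose_spec)⟩
  left_inv a := by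
    apply Subtype.ext
    exact (rel_unique h.symm
      (rel_symm h (rel_exists h (mem_image_prime.mp a.2)).choose_spec)
      (rel_exists h.symm (mem_image_prime.mp
        (mem_image_prime.mpr (rel_prime h (rel_exists h (mem_image_prime.mp a.2)).choose_spec)))).choose_spec).symm
  right_inv b := by
    apply Subtype.ext
    have hsp := (rel_exists h.symm (mem_image_prime.mp b.2)).choose_spec
    exact (rel_unique h (rel_symm h.symm hsp)
      (rel_exists h (mem_image_prime.mp (mem_image_prime.mpr (rel_prime h.symm hsp)))).choose_spec).symm

end Homeo

section Construction

variable {B : Type*} [CommRing B] [IsDomain B] [IsPrincipalIdealRing B]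

noncomputable def facEquiv (A : Type*) [CommRing A] [IsDomain A] [IsPrincipalIdealRing A] :
    Associates A ≃ Associates.FactorSet A where
  toFun := Associates.factors
  invFun := Associates.FactorSet.prod
  left_inv := Associates.factors_prod
  right_inv := Associates.prod_factors

def wtEquiv {I J : Type*} (e : I ≃ J) :
    WithTop (Multiset I) ≃ WithTop (Multiset J) where
  toFun := WithTop.map (Multiset.map e)
  invFun := WithTop.map (Multiset.map e.symm)
  left_inv s := by
    induction s using WithTop.recTopCoe <;>
      simp [WithTop.map_coe, Multiset.map_map, Function.comp]
  right_inv s := by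
    induction s using WithTop.recTopCoe <;>
      simp [WithTop.map_coe, Multiset.map_map, Function.comp]

lemma wtEquiv_le {I J : Type*} (e : I ≃ J) {s t : WithTop (Multiset I)} :
    wtEquiv e s ≤ wtEquiv e t ↔ s ≤ t :=
  WithTop.map_le_iff _ (Multiset.map_le_map_iff e.injective)

/-- The equivalence of `Associates` induced by a bijection of irreducible classes. -/
noncomputable def assocEquiv
    (e : {a : Associates A // Irreducible a} ≃ {a : Associates B // Irreducible a}) :
    Associates A ≃ Associates B :=
  (facEquiv A).trans ((wtEquiv e).trans (facEquiv B).symm)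

lemma assocEquiv_symm (e : {a : Associates A // Irreducible a} ≃ {a : Associates B // Irreducible a}) :
    (assocEquiv e).symm = assocEquiv e.symm :=
  Equiv.ext fun _ => rfl

lemma assocEquiv_zero (e : {a : Associates A // Irreducible a} ≃ {a : Associates B // Irreducible a}) :
    assocEquiv e 0 = 0 := by
  show Associates.FactorSet.prod (WithTop.map (Multiset.map e) (Associates.factors 0)) = 0
  rw [Associates.factors_zero, WithTop.map_top]
  rfl

lemma assocEquiv_factors (e : {a : Associates A // Irreducible a} ≃ {a : Associates B // Irreducible a})
    (a : Associates A) :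
    (assocEquiv e a).factors = wtEquiv e a.factors :=
  Associates.prod_factors _

lemma assocEquiv_le (e : {a : Associates A // Irreducible a} ≃ {a : Associates B // Irreducible a})
    {a b : Associates A} :
    assocEquiv e a ≤ assocEquiv e b ↔ a ≤ b := by
  rw [← Associates.factors_le, assocEquiv_factors, assocEquiv_factors, wtEquiv_le,
    Associates.factors_le]

lemma assocEquiv_dvd (e : {a : Associates A // Irreducible a} ≃ {a : Associates B // Irreducible a})
    (a b : Associates A) :
    a ∣ b ↔ assocEquiv e a ∣ assocEquiv e b := by
  have h1 : (a ∣ b) ↔ (a ≤ b) := Iff.rfl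
  have h2 : (assocEquiv e a ∣ assocEquiv e b) ↔ (assocEquiv e a ≤ assocEquiv e b) := Iff.rfl
  rw [h1, h2, assocEquiv_le]

lemma assocEquiv_prime (e : {a : Associates A // Irreducible a} ≃ {a : Associates B // Irreducible a})
    {P : Associates A} (hP : Prime P) : Prime (assocEquiv e P) := by
  have hirr : Irreducible P := hP.irreducible
  have key : assocEquiv e P = (e ⟨P, hirr⟩).1 := by
    show Associates.FactorSet.prod (WithTop.map (Multiset.map e) (Associates.factors P)) = _
    rw [Associates.factors_self hirr]
    show Associates.FactorSet.prod (WithTop.some (Multiset.map e {⟨P, hirr⟩})) = _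
    rw [Multiset.map_singleton]
    show (Multiset.map _ {e ⟨P, hirr⟩}).prod = _
    rw [Multiset.map_singleton, Multiset.prod_singleton]
  rw [key]
  exact associates_irreducible_iff_prime.mp (e ⟨P, hirr⟩).2

lemma quot_out_ne_zero {a : Associates A} (ha : a ≠ 0) : (Quot.out a : A) ≠ 0 := fun hc =>
  ha (by rw [← Associates.quot_out a, hc, Associates.mk_zero])

noncomputable def uPart (x : {x : A // x ≠ 0}) : Aˣ :=
  (Associates.mk_eq_mk_iff_associated.mp (Associates.quot_out (Associates.mk x.1))).choose

lemma uPart_spec (x : {x : A // x ≠ 0}) :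
    Quot.out (Associates.mk x.1) * ((uPart x : Aˣ) : A) = x.1 :=
  (Associates.mk_eq_mk_iff_associated.mp (Associates.quot_out (Associates.mk x.1))).choose_spec

noncomputable def Fmap (E : Associates A ≃ Associates B) (hz : ∀ a, a ≠ 0 → E a ≠ 0)
    (eU : Aˣ ≃ Bˣ) (x : {x : A // x ≠ 0}) : {x : B // x ≠ 0} :=
  ⟨Quot.out (E (Associates.mk x.1)) * ((eU (uPart x) : Bˣ) : B),
    mul_ne_zero (quot_out_ne_zero (hz _ (Associates.mk_ne_zero.mpr x.2))) (Units.ne_zero _)⟩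

lemma Fmap_mk (E : Associates A ≃ Associates B) (hz : ∀ a, a ≠ 0 → E a ≠ 0)
    (eU : Aˣ ≃ Bˣ) (x : {x : A // x ≠ 0}) :
    Associates.mk (Fmap E hz eU x).1 = E (Associates.mk x.1) := by
  show Associates.mk (Quot.out (E (Associates.mk x.1)) * _) = _
  have h1 : Associates.mk (((eU (uPart x) : Bˣ) : B)) = 1 :=
    Associates.mk_eq_one.mpr (Units.isUnit _)
  rw [← Associates.mk_mul_mk, h1, mul_one, Associates.quot_out]

lemma Fmap_inv (E : Associates A ≃ Associates B) (hz : ∀ a, a ≠ 0 → E a ≠ 0)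
    (eU : Aˣ ≃ Bˣ) (E' : Associates B ≃ Associates A) (hz' : ∀ a, a ≠ 0 → E' a ≠ 0)
    (eU' : Bˣ ≃ Aˣ) (hE' : ∀ a, E' (E a) = a) (hU' : ∀ u, eU' (eU u) = u)
    (x : {x : A // x ≠ 0}) : Fmap E' hz' eU' (Fmap E hz eU x) = x := by
  apply Subtype.ext
  show Quot.out (E' (Associates.mk (Fmap E hz eU x).1)) *
    ((eU' (uPart (Fmap E hz eU x)) : Aˣ) : A) = x.1
  have h1 : Associates.mk (Fmap E hz eU x).1 = E (Associates.mk x.1) := Fmap_mk E hz eU x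
  have h2 : uPart (Fmap E hz eU x) = eU (uPart x) := by
    apply Units.ext
    have hs := uPart_spec (Fmap E hz eU x)
    rw [h1] at hs
    have h3 : (Fmap E hz eU x).1 =
        Quot.out (E (Associates.mk x.1)) * ((eU (uPart x) : Bˣ) : B) := rfl
    rw [h3] at hs
    exact mul_left_cancel₀ (quot_out_ne_zero (hz _ (Associates.mk_ne_zero.mpr x.2))) hs
  rw [h1, h2, hE', hU', uPart_spec]

lemma dvd_prime_multiset_prod_iff {M : Multiset (Associates A)} (hM : ∀ P ∈ M, Prime P)
    {Q : Associates A} (hQ : Prime Q) : Q ∣ M.prod ↔ Q ∈ M := by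
  constructor
  · intro hd
    obtain ⟨P, hPM, hQP⟩ := hQ.exists_mem_multiset_dvd hd
    rwa [associated_iff_eq.mp (hQ.associated_of_dvd (hM P hPM) hQP)]
  · exact Multiset.dvd_prod

lemma continuous_Fmap (E : Associates A ≃ Associates B) (hz : ∀ a, a ≠ 0 → E a ≠ 0)
    (eU : Aˣ ≃ Bˣ)
    (hpr : ∀ P : Associates A, Prime P → Prime (E P))
    (hpr' : ∀ Q : Associates B, Prime Q → Prime (E.symm Q))
    (hdvd : ∀ a b : Associates A, a ∣ b ↔ E a ∣ E b) :
    Continuous (Fmap E hz eU) := by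
  refine continuous_generateFrom_iff.mpr ?_
  rintro U ⟨k', hk', rfl⟩
  set m : Multiset B := UniqueFactorizationMonoid.factors k' with hm
  set g : B → A := fun q => Quot.out (E.symm (Associates.mk q)) with hg
  set k : A := (m.map g).prod with hkdef
  have hkprimes : ∀ p ∈ m.map g, Prime p := by
    intro p hp
    obtain ⟨q, hq, rfl⟩ := Multiset.mem_map.mp hp
    have hq' : Prime q := UniqueFactorizationMonoid.prime_of_factor q hq
    have hEq : Prime (E.symm (Associates.mk q)) := hpr' _ (Associates.prime_mk.mpr hq')
    exact Associates.prime_mk.mp (by rw [hg, Associates.quot_out]; exact hEq)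
  have hk0 : k ≠ 0 := Multiset.prod_ne_zero (fun h0 => (hkprimes 0 h0).ne_zero rfl)
  have hmkk : Associates.mk k = (m.map (fun q => E.symm (Associates.mk q))).prod := by
    rw [hkdef, ← Associates.mkMonoidHom_apply, map_multiset_prod, Multiset.map_map]
    refine congrArg Multiset.prod (Multiset.map_congr rfl ?_)
    intro q hq
    simp only [Function.comp_apply, Associates.mkMonoidHom_apply, hg, Associates.quot_out]
  have hmkk' : Associates.mk k' = (m.map Associates.mk).prod := by
    have hass : Associated m.prod k' := UniqueFactorizationMonoid.factors_prod hk'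
    rw [← Associates.mk_eq_mk_iff_associated.mpr hass, ← Associates.mkMonoidHom_apply,
      map_multiset_prod]
    rfl
  have hPm : ∀ P ∈ m.map Associates.mk, Prime P := by
    rintro P hP
    obtain ⟨q, hq, rfl⟩ := Multiset.mem_map.mp hP
    exact Associates.prime_mk.mpr (UniqueFactorizationMonoid.prime_of_factor q hq)
  have hPm' : ∀ P ∈ m.map (fun q => E.symm (Associates.mk q)), Prime P := by
    rintro P hP
    obtain ⟨q, hq, rfl⟩ := Multiset.mem_map.mp hP
    exact hpr' _ (Associates.prime_mk.mpr (UniqueFactorizationMonoid.prime_of_factor q hq))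
  have hdiv' : ∀ Q : Associates B, Prime Q →
      (Q ∣ Associates.mk k' ↔ E.symm Q ∣ Associates.mk k) := by
    intro Q hQ
    rw [hmkk, hmkk', dvd_prime_multiset_prod_iff hPm hQ,
      dvd_prime_multiset_prod_iff hPm' (hpr' Q hQ)]
    simp only [Multiset.mem_map]
    exact exists_congr fun q => and_congr_right fun _ => (Equiv.apply_eq_iff_eq E.symm).symm
  have hset : Fmap E hz eU ⁻¹' (sigma0 B k') = sigma0 A k := by
    ext x
    rw [Set.mem_preimage, mem_sigma0, mem_sigma0, isCoprime_iff_forall_primeA hk',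
      isCoprime_iff_forall_primeA hk0, Fmap_mk]
    constructor
    · intro H P hP hPk hPx
      exact H (E P) (hpr P hP)
        ((hdiv' (E P) (hpr P hP)).mpr (by rwa [Equiv.symm_apply_apply]))
        ((hdvd _ _).mp hPx)
    · intro H Q hQ hQk' hQx
      refine H (E.symm Q) (hpr' Q hQ) ((hdiv' Q hQ).mp hQk') ?_
      exact (hdvd _ _).mpr (by rw [Equiv.apply_symm_apply]; exact hQx)
  rw [hset]
  exact isOpen_generateFrom_of_mem ⟨k, hk0, rfl⟩

noncomputable def homeoOfEquivs (eU : Aˣ ≃ Bˣ)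
    (e : {a : Associates A // Irreducible a} ≃ {a : Associates B // Irreducible a}) :
    @Homeomorph {x : A // x ≠ 0} {x : B // x ≠ 0} (maciasTop A) (maciasTop B) := by
  set E : Associates A ≃ Associates B := assocEquiv e with hE
  have hz : ∀ a, a ≠ 0 → E a ≠ 0 := fun a ha hc =>
    ha (E.injective (hc.trans (assocEquiv_zero e).symm))
  have hz' : ∀ b, b ≠ 0 → E.symm b ≠ 0 := fun b hb hc =>
    hb (by rw [← E.apply_symm_apply b, hc, hE, assocEquiv_zero])
  have hpr : ∀ P : Associates A, Prime P → Prime (E P) := fun P hP => assocEquiv_prime e hP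
  have hpr' : ∀ Q : Associates B, Prime Q → Prime (E.symm Q) := fun Q hQ => by
    rw [hE, assocEquiv_symm]
    exact assocEquiv_prime e.symm hQ
  have hdvd : ∀ a b : Associates A, a ∣ b ↔ E a ∣ E b := fun a b => assocEquiv_dvd e a b
  have hdvd' : ∀ a b : Associates B, a ∣ b ↔ E.symm a ∣ E.symm b := fun a b =>
    ((hdvd (E.symm a) (E.symm b)).trans
      (by rw [E.apply_symm_apply, E.apply_symm_apply])).symm
  have hpr'' : ∀ P : Associates A, Prime P → Prime (E.symm.symm P) := fun P hP => by
    rw [Equiv.symm_symm]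
    exact hpr P hP
  exact
    { toFun := Fmap E hz eU
      invFun := Fmap E.symm hz' eU.symm
      left_inv := Fmap_inv E hz eU E.symm hz' eU.symm E.symm_apply_apply eU.symm_apply_apply
      right_inv := Fmap_inv E.symm hz' eU.symm E hz eU E.apply_symm_apply eU.apply_symm_apply
      continuous_toFun := continuous_Fmap E hz eU hpr hpr' hdvd
      continuous_invFun := continuous_Fmap E.symm hz' eU.symm hpr' hpr'' hdvd' }

end Construction

end Stmt19Aux

theorem stmt19 (R S : Type*) [CommRing R] [IsDomain R] [IsPrincipalIdealRing R]
    [CommRing S] [IsDomain S] [IsPrincipalIdealRing S]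
    [Infinite R] [Infinite S] (hR : ¬ IsField R) (hS : ¬ IsField S) :
    Nonempty (@Homeomorph {x : R // x ≠ 0} {x : S // x ≠ 0} (maciasTop R) (maciasTop S)) ↔
      (Nonempty (Rˣ ≃ Sˣ) ∧
        Nonempty ((Associates.mk '' {p : R | Prime p}) ≃
          (Associates.mk '' {p : S | Prime p}))) := by
  constructor
  · rintro ⟨h⟩
    exact ⟨⟨Stmt19Aux.unitsEquiv h⟩, ⟨Stmt19Aux.primesEquiv h⟩⟩
  · rintro ⟨⟨eU⟩, ⟨eP⟩⟩
    refine ⟨Stmt19Aux.homeoOfEquivs eU ?_⟩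
    have hsR : ∀ a : Associates R, a ∈ Associates.mk '' {p : R | Prime p} ↔ Irreducible a :=
      fun a => Stmt19Aux.mem_image_prime.trans
        ⟨Prime.irreducible, associates_irreducible_iff_prime.mp⟩
    have hsS : ∀ a : Associates S, a ∈ Associates.mk '' {p : S | Prime p} ↔ Irreducible a :=
      fun a => Stmt19Aux.mem_image_prime.trans
        ⟨Prime.irreducible, associates_irreducible_iff_prime.mp⟩
    exact ((Equiv.subtypeEquivRight fun a => (hsR a).symm).trans eP).trans
      (Equiv.subtypeEquivRight fun a => hsS a)
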